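/- arXiv:2603.14428 — 2 statements merged into one kernel-verified Lean document; each statement's English description precedes it below -/
import Mathlib

section
/- Let P = P(M,F) be a reduced poset with M finite, D = P(N,∅) a reduced poset with |N| = m maximal elements, f : P → D a surjective pp-morphism, and π : M → K a surjection onto a finite set K such that π(a) = π(b) implies f({a}) = f({b}). Then there is a well-defined surjective pp-morphism f̄ : P^π → D given by f̄(π[X]) = f(X), where P^π = {π[X] : X ∈ P} is ordered by reverse inclusion. -/
open Set Function

variable {α β γ : Type*}

/-- `Mset x` is the set of maximal elements (of the ambient poset) lying above `x`. -/
def Mset [PartialOrder α] (x : α) : Set α := {y | IsMax y ∧ x ≤ y}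

/-- A pp-morphism: an order-preserving map `h` with `M(h x) = h[M x]` for all `x`. -/
def IsPP [PartialOrder α] [PartialOrder β] (h : α → β) : Prop :=
  Monotone h ∧ ∀ x, Mset (h x) = h '' Mset x

/-- The reverse-inclusion partial order on a family of subsets. -/
def revPO (p : Set α → Prop) : PartialOrder {S : Set α // p S} :=
  PartialOrder.lift (fun A => OrderDual.toDual (A : Set α))
    (fun A B h => Subtype.ext (by simpa using h))

/-- Membership in the reduced poset `P(M, F)`: the base `M`, the singletons of elements
of `M`, and the members of `F`. -/
def RMem (M : Set α) (F : Set (Set α)) (S : Set α) : Prop :=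
  S = M ∨ (∃ m ∈ M, S = {m}) ∨ S ∈ F

/-- The reduced poset `P(M, F)`, ordered by reverse inclusion. -/
def Red (M : Set α) (F : Set (Set α)) := {S : Set α // RMem M F S}

instance (M : Set α) (F : Set (Set α)) : PartialOrder (Red M F) := revPO _

/-- The bottom element `M` of the reduced poset `P(M, F)`. -/
def botElem (M : Set α) (F : Set (Set α)) : Red M F := ⟨M, Or.inl rfl⟩

/-- The singleton element `{x}` (for `x ∈ M`) of the reduced poset `P(M, F)`. -/
def singElem (M : Set α) (F : Set (Set α)) {x : α} (hx : x ∈ M) : Red M F :=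
  ⟨{x}, Or.inr (Or.inl ⟨x, hx, rfl⟩)⟩

/-- The poset `P^π = { π[X] : X ∈ P(M,F) }`, ordered by reverse inclusion. -/
def Ppi (M : Set α) (F : Set (Set α)) (π : α → β) :=
  {T : Set β // ∃ X : Red M F, T = π '' X.1}

instance (M : Set α) (F : Set (Set α)) (π : α → β) : PartialOrder (Ppi M F π) := revPO _

section Aux

variable {M : Set α} {F : Set (Set α)}

lemma red_le {x y : Red M F} : x ≤ y ↔ y.1 ⊆ x.1 := Iff.rfl

lemma red_subset (hF : ∀ S ∈ F, S.Nonempty ∧ S ⊆ M) (x : Red M F) : x.1 ⊆ M := by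
  rcases x.2 with h | ⟨a, ha, h⟩ | h
  · exact h.subset
  · rw [h]; exact singleton_subset_iff.2 ha
  · exact (hF _ h).2

lemma red_ne (hMne : M.Nonempty) (hF : ∀ S ∈ F, S.Nonempty ∧ S ⊆ M) (x : Red M F) :
    x.1.Nonempty := by
  rcases x.2 with h | ⟨a, ha, h⟩ | h
  · rw [h]; exact hMne
  · rw [h]; exact singleton_nonempty a
  · exact (hF _ h).1

lemma sing_isMax (hF : ∀ S ∈ F, S.Nonempty ∧ S ⊆ M) {a : α} (ha : a ∈ M) :
    IsMax (singElem M F ha) := by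
  intro z hz
  have hzs : z.1 ⊆ {a} := hz
  have hne : z.1.Nonempty := red_ne ⟨a, ha⟩ hF z
  have h2 : z.1 = {a} := (subset_singleton_iff_eq.1 hzs).resolve_left hne.ne_empty
  exact le_of_eq (Subtype.ext h2)

lemma mem_Mset_red (hMne : M.Nonempty) (hF : ∀ S ∈ F, S.Nonempty ∧ S ⊆ M)
    {x y : Red M F} : y ∈ Mset x ↔ ∃ a ∈ x.1, y.1 = {a} := by
  constructor
  · rintro ⟨hmax, hle⟩
    have hyx : y.1 ⊆ x.1 := hle
    obtain ⟨a, hay⟩ := red_ne hMne hF y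
    have haM : a ∈ M := red_subset hF y hay
    have h1 : y ≤ singElem M F haM := singleton_subset_iff.2 hay
    have h2 : y.1 ⊆ {a} := hmax h1
    exact ⟨a, hyx hay, subset_antisymm h2 (singleton_subset_iff.2 hay)⟩
  · rintro ⟨a, hax, hy⟩
    have haM : a ∈ M := red_subset hF x hax
    refine ⟨?_, ?_⟩
    · rw [show y = singElem M F haM from Subtype.ext hy]
      exact sing_isMax hF haM
    · show y.1 ⊆ x.1
      rw [hy]
      exact singleton_subset_iff.2 hax

lemma D_hF {N : Set β} : ∀ S ∈ (∅ : Set (Set β)), S.Nonempty ∧ S ⊆ N :=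
  fun _ h => h.elim

lemma D_mem_union {N : Set β} (x : Red N (∅ : Set (Set β))) {n : β} :
    n ∈ x.1 ↔ ∃ y ∈ Mset x, n ∈ y.1 := by
  constructor
  · intro hn
    have hnN : n ∈ N := red_subset D_hF x hn
    exact ⟨singElem N ∅ hnN, ⟨sing_isMax D_hF hnN,
      show x ≤ _ from singleton_subset_iff.2 hn⟩, rfl⟩
  · rintro ⟨y, ⟨_, hle⟩, hn⟩
    exact (show y.1 ⊆ x.1 from hle) hn

lemma D_inj {N : Set β} {x y : Red N (∅ : Set (Set β))} (h : Mset x = Mset y) :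
    x = y := by
  apply Subtype.ext
  ext n
  rw [D_mem_union, D_mem_union, h]

lemma ppi_ne {π : α → γ} (hMne : M.Nonempty) (hF : ∀ S ∈ F, S.Nonempty ∧ S ⊆ M)
    (T : Ppi M F π) : T.1.Nonempty := by
  obtain ⟨X, hX⟩ := T.2
  rw [hX]
  exact (red_ne hMne hF X).image π

lemma mem_Mset_Ppi {π : α → γ} (hMne : M.Nonempty) (hF : ∀ S ∈ F, S.Nonempty ∧ S ⊆ M)
    {T y : Ppi M F π} : y ∈ Mset T ↔ ∃ c ∈ T.1, y.1 = {c} := by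
  have hsingmax : ∀ (z : Ppi M F π) (c : γ), z.1 = {c} → IsMax z := by
    intro z c hz w hw
    have h1 : w.1 ⊆ {c} := hz ▸ (show w.1 ⊆ z.1 from hw)
    have h2 : w.1 = {c} := (subset_singleton_iff_eq.1 h1).resolve_left
      (ppi_ne hMne hF w).ne_empty
    exact le_of_eq (Subtype.ext (h2.trans hz.symm))
  constructor
  · rintro ⟨hmax, hle⟩
    obtain ⟨c, hc⟩ := ppi_ne hMne hF y
    have hyT : y.1 ⊆ T.1 := hle
    have hcT : c ∈ T.1 := hyT hc
    obtain ⟨X, hX⟩ := T.2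
    have hcX : c ∈ π '' X.1 := hX ▸ hcT
    obtain ⟨a, haX, hac⟩ := hcX
    have haM : a ∈ M := red_subset hF X haX
    set z : Ppi M F π := ⟨{c}, singElem M F haM, by
      show ({c} : Set γ) = π '' {a}; rw [image_singleton, hac]⟩ with hzdef
    have h1 : y ≤ z := show z.1 ⊆ y.1 from singleton_subset_iff.2 hc
    have h2 : y.1 ⊆ {c} := hmax h1
    exact ⟨c, hcT, subset_antisymm h2 (singleton_subset_iff.2 hc)⟩
  · rintro ⟨c, hcT, hy⟩
    refine ⟨hsingmax y c hy, ?_⟩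
    show y.1 ⊆ T.1
    rw [hy]
    exact singleton_subset_iff.2 hcT

end Aux


/-- The induced map `f̄(π[X]) = f X` is a well-defined surjective pp-morphism
`P^π → D`. -/
theorem stmt11 {β γ : Type*} (m : ℕ) (M : Set α) (F : Set (Set α))
    (hM : M.Finite) (hMne : M.Nonempty)
    (hF : ∀ S ∈ F, S.Nonempty ∧ S ⊆ M)
    (N : Set β) (hN : N.Finite) (hNcard : N.ncard = m)
    (f : Red M F → Red N (∅ : Set (Set β)))
    (hf : Function.Surjective f) (hpp : IsPP f)
    [Finite γ] (π : α → γ) (hπ : Set.SurjOn π M Set.univ)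
    (hcomp : ∀ a (ha : a ∈ M), ∀ b (hb : b ∈ M), π a = π b →
      f (singElem M F ha) = f (singElem M F hb)) :
    ∃ fbar : Ppi M F π → Red N (∅ : Set (Set β)),
      (∀ X : Red M F, fbar ⟨π '' X.1, X, rfl⟩ = f X) ∧
      Function.Surjective fbar ∧ IsPP fbar := by
  classical
  -- key comparison lemma
  have key : ∀ X Y : Red M F, π '' X.1 ⊆ π '' Y.1 → f '' Mset X ⊆ f '' Mset Y := by
    rintro X Y hXY z ⟨y, hy, rfl⟩
    obtain ⟨a, haX, hya⟩ := (mem_Mset_red hMne hF).1 hy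
    have haM : a ∈ M := red_subset hF X haX
    obtain ⟨b, hbY, hba⟩ := hXY (mem_image_of_mem π haX)
    have hbM : b ∈ M := red_subset hF Y hbY
    refine ⟨singElem M F hbM, (mem_Mset_red hMne hF).2 ⟨b, hbY, rfl⟩, ?_⟩
    rw [show y = singElem M F haM from Subtype.ext hya]
    exact hcomp b hbM a haM hba
  have keyD : ∀ X Y : Red M F, π '' X.1 ⊆ π '' Y.1 → f Y ≤ f X := by
    intro X Y h
    show (f X).1 ⊆ (f Y).1
    intro n hn
    obtain ⟨y, hy, hny⟩ := (D_mem_union (f X)).1 hn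
    have hy' : y ∈ Mset (f Y) := by
      rw [hpp.2] at hy ⊢
      exact key X Y h hy
    exact (D_mem_union (f Y)).2 ⟨y, hy', hny⟩
  have wd : ∀ X Y : Red M F, π '' X.1 = π '' Y.1 → f X = f Y := fun X Y h =>
    le_antisymm (keyD Y X h.symm.subset) (keyD X Y h.subset)
  set fbar : Ppi M F π → Red N (∅ : Set (Set β)) := fun T => f T.2.choose with hfbar
  have hrep : ∀ (T : Ppi M F π) (X : Red M F), T.1 = π '' X.1 → fbar T = f X := by
    intro T X hT
    exact wd _ X (T.2.choose_spec.symm.trans hT)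
  refine ⟨fbar, fun X => hrep _ X rfl, ?_, ?_, ?_⟩
  · intro d
    obtain ⟨X, hX⟩ := hf d
    exact ⟨⟨π '' X.1, X, rfl⟩, (hrep _ X rfl).trans hX⟩
  · -- monotone
    intro T T' hle
    obtain ⟨X, hX⟩ := T.2
    obtain ⟨X', hX'⟩ := T'.2
    have hsub : π '' X'.1 ⊆ π '' X.1 := by
      rw [← hX, ← hX']
      exact hle
    rw [hrep T X hX, hrep T' X' hX']
    exact keyD X' X hsub
  · -- Mset condition
    intro T
    obtain ⟨X, hX⟩ := T.2
    rw [hrep T X hX, hpp.2]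
    apply subset_antisymm
    · rintro z ⟨y, hy, rfl⟩
      obtain ⟨a, haX, hya⟩ := (mem_Mset_red hMne hF).1 hy
      have haM : a ∈ M := red_subset hF X haX
      refine ⟨⟨π '' {a}, singElem M F haM, rfl⟩, ?_, ?_⟩
      · refine (mem_Mset_Ppi hMne hF).2 ⟨π a, ?_, image_singleton⟩
        rw [hX]
        exact mem_image_of_mem π haX
      · rw [hrep ⟨π '' {a}, singElem M F haM, rfl⟩ (singElem M F haM) rfl,
          show y = singElem M F haM from Subtype.ext hya]
    · rintro z ⟨w, hw, rfl⟩
      obtain ⟨c, hcT, hwc⟩ := (mem_Mset_Ppi hMne hF).1 hw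
      have hcX : c ∈ π '' X.1 := hX ▸ hcT
      obtain ⟨a, haX, hac⟩ := hcX
      have haM : a ∈ M := red_subset hF X haX
      refine ⟨singElem M F haM, (mem_Mset_red hMne hF).2 ⟨a, haX, rfl⟩, ?_⟩
      refine (hrep w (singElem M F haM) ?_).symm
      rw [hwc]
      show ({c} : Set γ) = π '' {a}
      rw [image_singleton, hac]
end

section
/- Let M be a finite set, P = P(M,F) and Q = P(M,G) reduced posets, and suppose g : P → Q is a pp-morphism with g(M) = M (bottom to bottom). Then g maps the set of maximal elements of P bijectively onto the set of maximal elements of Q, and hence induces a permutation σ of M with g(X) = σ[X] for all X ∈ P; consequently each element of F is mapped to an element of {M} ∪ {{x} : x ∈ M} ∪ G of the same cardinality. -/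
open Set Function

variable {α β γ : Type*}

theorem red_le_iff {M : Set α} {F : Set (Set α)} (X Y : Red M F) :
    X ≤ Y ↔ Y.1 ⊆ X.1 := Iff.rfl

theorem red_ne_sub {M : Set α} {F : Set (Set α)} (hMne : M.Nonempty)
    (hF : ∀ S ∈ F, S.Nonempty ∧ S ⊆ M) (X : Red M F) :
    X.1.Nonempty ∧ X.1 ⊆ M := by
  rcases X.2 with h | ⟨m, hm, h⟩ | h
  · rw [h]; exact ⟨hMne, subset_rfl⟩
  · rw [h]; exact ⟨singleton_nonempty m, singleton_subset_iff.mpr hm⟩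
  · exact ⟨(hF _ h).1, (hF _ h).2⟩

theorem red_isMax_iff {M : Set α} {F : Set (Set α)} (hMne : M.Nonempty)
    (hF : ∀ S ∈ F, S.Nonempty ∧ S ⊆ M) (X : Red M F) :
    IsMax X ↔ ∃ m ∈ M, X.1 = {m} := by
  constructor
  · intro hmax
    obtain ⟨⟨m, hmX⟩, hsub⟩ := red_ne_sub hMne hF X
    refine ⟨m, hsub hmX, ?_⟩
    have h1 : X ≤ singElem M F (hsub hmX) :=
      (red_le_iff _ _).mpr (singleton_subset_iff.mpr hmX)
    have h2 := hmax h1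
    rw [red_le_iff] at h2
    exact Subset.antisymm h2 (by simpa using hmX)
  · rintro ⟨m, hm, hX⟩ Y hXY
    rw [red_le_iff] at hXY ⊢
    rw [hX] at hXY
    have hne := (red_ne_sub hMne hF Y).1
    have hY1 : Y.1 = {m} :=
      (Set.subset_singleton_iff_eq.mp hXY).resolve_left (Nonempty.ne_empty hne)
    rw [hX, hY1]

theorem red_mset {M : Set α} {F : Set (Set α)} (hMne : M.Nonempty)
    (hF : ∀ S ∈ F, S.Nonempty ∧ S ⊆ M) (X : Red M F) :
    Mset X = {Y | ∃ m ∈ X.1, Y.1 = {m}} := by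
  have hsub := (red_ne_sub hMne hF X).2
  ext Y
  simp only [Mset, mem_setOf_eq, red_isMax_iff hMne hF, red_le_iff]
  constructor
  · rintro ⟨⟨m, hm, hY⟩, hYX⟩
    exact ⟨m, hYX (hY ▸ rfl), hY⟩
  · rintro ⟨m, hmX, hY⟩
    exact ⟨⟨m, hsub hmX, hY⟩, by rw [hY]; simpa using hmX⟩

theorem red_max_card {M : Set α} {F : Set (Set α)} (hMne : M.Nonempty)
    (hF : ∀ S ∈ F, S.Nonempty ∧ S ⊆ M) :
    (Subtype.val '' {X : Red M F | IsMax X}) = (fun m : α => ({m} : Set α)) '' M := by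
  ext S
  constructor
  · rintro ⟨X, hX, rfl⟩
    obtain ⟨m, hm, hXm⟩ := (red_isMax_iff hMne hF X).mp hX
    exact ⟨m, hm, hXm.symm⟩
  · rintro ⟨m, hm, rfl⟩
    exact ⟨singElem M F hm, (red_isMax_iff hMne hF _).mpr ⟨m, hm, rfl⟩, rfl⟩


/-- A pp-morphism `P(M,F) → P(M,G)` sending bottom to bottom restricts to a bijection on
maximal elements, is induced by a permutation `σ` of `M` via `X ↦ σ[X]`, and sends each
member of `F` to an element of the same cardinality. -/
theorem stmt15 (M : Set α) (hM : M.Finite) (hMne : M.Nonempty)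
    (F G : Set (Set α)) (hF : ∀ S ∈ F, S.Nonempty ∧ S ⊆ M)
    (hG : ∀ S ∈ G, S.Nonempty ∧ S ⊆ M)
    (g : Red M F → Red M G) (hpp : IsPP g)
    (hbot : g (botElem M F) = botElem M G) :
    Set.BijOn g {X : Red M F | IsMax X} {Y : Red M G | IsMax Y} ∧
    ∃ σ : α → α, Set.BijOn σ M M ∧
      (∀ X : Red M F, (g X).1 = σ '' X.1) ∧
      (∀ S (hS : S ∈ F), ((g ⟨S, Or.inr (Or.inr hS)⟩).1).ncard = S.ncard) := by
  set MaxP := {X : Red M F | IsMax X} with hMaxP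
  set MaxQ := {Y : Red M G | IsMax Y} with hMaxQ
  -- Mset of bottoms are the full maximal sets
  have hmsbotP : Mset (botElem M F) = MaxP := by
    ext Y
    simp only [Mset, mem_setOf_eq, hMaxP, and_iff_left_iff_imp]
    intro _
    exact (red_le_iff _ _).mpr (red_ne_sub hMne hF Y).2
  have hmsbotQ : Mset (botElem M G) = MaxQ := by
    ext Y
    simp only [Mset, mem_setOf_eq, hMaxQ, and_iff_left_iff_imp]
    intro _
    exact (red_le_iff _ _).mpr (red_ne_sub hMne hG Y).2
  have himg : g '' MaxP = MaxQ := by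
    have := hpp.2 (botElem M F)
    rw [hbot, hmsbotQ, hmsbotP] at this
    exact this.symm
  -- cardinalities
  have hcardP : MaxP.ncard = M.ncard := by
    erw [← Set.ncard_image_of_injective MaxP Subtype.val_injective, hMaxP,
      red_max_card hMne hF, Set.ncard_image_of_injective _ (fun a b h => by
        simpa using h)]
  have hcardQ : MaxQ.ncard = M.ncard := by
    erw [← Set.ncard_image_of_injective MaxQ Subtype.val_injective, hMaxQ,
      red_max_card hMne hG, Set.ncard_image_of_injective _ (fun a b h => by
        simpa using h)]
  have hfinP : MaxP.Finite := by
    apply Set.Finite.of_finite_image _ Subtype.val_injective.injOn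
    erw [hMaxP, red_max_card hMne hF]
    exact hM.image _
  have hinj : Set.InjOn g MaxP := by
    apply Set.injOn_of_ncard_image_eq _ hfinP
    rw [himg, hcardQ, hcardP]
  have hbij : Set.BijOn g MaxP MaxQ :=
    ⟨fun X hX => himg ▸ mem_image_of_mem g hX, hinj, fun Y hY => himg ▸ hY⟩
  refine ⟨hbij, ?_⟩
  -- the permutation
  have hmaxsing : ∀ {m : α} (hm : m ∈ M), ∃ m' ∈ M, (g (singElem M F hm)).1 = {m'} := by
    intro m hm
    have hmax : IsMax (singElem M F hm) := (red_isMax_iff hMne hF _).mpr ⟨m, hm, rfl⟩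
    exact (red_isMax_iff hMne hG _).mp (hbij.1 hmax)
  classical
  set σ : α → α := fun m => if h : m ∈ M then (hmaxsing h).choose else m with hσdef
  have hσ : ∀ {m : α} (hm : m ∈ M), σ m ∈ M ∧ (g (singElem M F hm)).1 = {σ m} := by
    intro m hm
    simp only [hσdef, dif_pos hm]
    exact (hmaxsing hm).choose_spec
  -- key formula
  have hkey : ∀ X : Red M F, (g X).1 = σ '' X.1 := by
    intro X
    have hms : Mset (g X) = g '' Mset X := hpp.2 X
    ext y
    constructor
    · intro hy
      have hyM : y ∈ M := (red_ne_sub hMne hG (g X)).2 hy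
      have hYin : singElem M G hyM ∈ Mset (g X) := by
        rw [red_mset hMne hG]
        exact ⟨y, hy, rfl⟩
      rw [hms] at hYin
      obtain ⟨W, hW, hgW⟩ := hYin
      rw [red_mset hMne hF] at hW
      obtain ⟨x, hxX, hWx⟩ := hW
      have hxM : x ∈ M := (red_ne_sub hMne hF X).2 hxX
      have hWeq : W = singElem M F hxM := Subtype.ext hWx
      rw [hWeq] at hgW
      have := (hσ hxM).2
      rw [hgW] at this
      have : ({y} : Set α) = {σ x} := this
      exact ⟨x, hxX, (singleton_eq_singleton_iff.mp this).symm⟩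
    · rintro ⟨x, hxX, rfl⟩
      have hxM : x ∈ M := (red_ne_sub hMne hF X).2 hxX
      have hWin : singElem M F hxM ∈ Mset X := by
        rw [red_mset hMne hF]
        exact ⟨x, hxX, rfl⟩
      have : g (singElem M F hxM) ∈ Mset (g X) := hms ▸ mem_image_of_mem g hWin
      rw [red_mset hMne hG] at this
      obtain ⟨m, hmgX, hval⟩ := this
      rw [(hσ hxM).2] at hval
      rw [singleton_eq_singleton_iff.mp hval]
      exact hmgX
  -- σ bijective on M
  have hσinj : Set.InjOn σ M := by
    intro a ha b hb hab
    have h1 : g (singElem M F ha) = g (singElem M F hb) :=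
      Subtype.ext (by rw [(hσ ha).2, (hσ hb).2, hab])
    have h2 := hinj ((red_isMax_iff hMne hF _).mpr ⟨a, ha, rfl⟩)
      ((red_isMax_iff hMne hF _).mpr ⟨b, hb, rfl⟩) h1
    have : ({a} : Set α) = {b} := congrArg Subtype.val h2
    exact singleton_eq_singleton_iff.mp this
  have hσsurj : Set.SurjOn σ M M := by
    intro y hy
    have : singElem M G hy ∈ MaxQ := (red_isMax_iff hMne hG _).mpr ⟨y, hy, rfl⟩
    obtain ⟨X, hX, hgX⟩ := hbij.2.2 this
    obtain ⟨m, hm, hXm⟩ := (red_isMax_iff hMne hF X).mp hX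
    have hXeq : X = singElem M F hm := Subtype.ext hXm
    rw [hXeq] at hgX
    have : ({σ m} : Set α) = {y} := by
      rw [← (hσ hm).2, hgX]; rfl
    exact ⟨m, hm, singleton_eq_singleton_iff.mp this⟩
  refine ⟨σ, ⟨fun m hm => (hσ hm).1, hσinj, hσsurj⟩, hkey, ?_⟩
  intro S hS
  rw [hkey ⟨S, Or.inr (Or.inr hS)⟩]
  exact Set.ncard_image_of_injOn (hσinj.mono (hF S hS).2)
end
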